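/- Let G = ([N], E) be a directed acyclic graph on vertex set [N] = {1,…,N} all of whose edges (u,v) satisfy u < v, and suppose G is a δ-local expander with δ < min(γ/2, 1/4) for some 0 < γ < 1. Let S ⊆ [N] and let x < y be two nodes of [N] that are both γ-good with respect to S. Then there is a directed path in G from x to y all of whose vertices (including x and y) lie outside S. -/

import Mathlib

open scoped Classical

/-- A DAG on `[N] = {1,…,N}` (edge relation `E`, all edges `(u,v)` with `u < v`) is a
`δ`-local expander if for every `v ≥ 1`, `r ≥ 1` with `v + 2r − 1 ≤ N` and every
`X ⊆ {v,…,v+r−1}`, `Y ⊆ {v+r,…,v+2r−1}` with `|X| ≥ δr` and `|Y| ≥ δr`, there is an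
edge from `X` to `Y`. -/
def IsLocalExpander (N : ℕ) (E : ℕ → ℕ → Prop) (δ : ℝ) : Prop :=
  ∀ v r : ℕ, 1 ≤ v → 1 ≤ r → v + 2 * r - 1 ≤ N →
    ∀ X Y : Finset ℕ, X ⊆ Finset.Icc v (v + r - 1) →
      Y ⊆ Finset.Icc (v + r) (v + 2 * r - 1) →
      δ * r ≤ (X.card : ℝ) → δ * r ≤ (Y.card : ℝ) →
      ∃ x ∈ X, ∃ y ∈ Y, E x y

/-- A node `x ∈ [N]` is `γ`-good with respect to `S ⊆ [N]` if for every `r ≥ 1` with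
`x − r + 1 ≥ 1` we have `|I_r(x) \ S| ≥ γ|I_r(x)|` where `I_r(x) = {x−r+1,…,x}`, and
for every `r ≥ 1` with `x + r ≤ N` we have `|I*_r(x) \ S| ≥ γ|I*_r(x)|` where
`I*_r(x) = {x+1,…,x+r}`. -/
def IsGood (N : ℕ) (γ : ℝ) (S : Finset ℕ) (x : ℕ) : Prop :=
  (∀ r : ℕ, 1 ≤ r → r ≤ x →
    γ * ((Finset.Icc (x - r + 1) x).card : ℝ) ≤ (((Finset.Icc (x - r + 1) x) \ S).card : ℝ)) ∧
  (∀ r : ℕ, 1 ≤ r → x + r ≤ N →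
    γ * ((Finset.Icc (x + 1) (x + r)).card : ℝ) ≤ (((Finset.Icc (x + 1) (x + r)) \ S).card : ℝ))


def ReachF (E : ℕ → ℕ → Prop) (S : Finset ℕ) (x v : ℕ) : Prop :=
  ∃ l : List ℕ, List.Chain E x l ∧ (x :: l).getLast (List.cons_ne_nil x l) = v ∧
    ∀ w ∈ x :: l, w ∉ S

def ReachB (E : ℕ → ℕ → Prop) (S : Finset ℕ) (y u : ℕ) : Prop :=
  ∃ l : List ℕ, List.Chain E u l ∧ (u :: l).getLast (List.cons_ne_nil u l) = y ∧
    ∀ w ∈ u :: l, w ∉ S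

lemma reachF_self {E : ℕ → ℕ → Prop} {S : Finset ℕ} {x : ℕ} (hx : x ∉ S) : ReachF E S x x :=
  ⟨[], List.Chain.nil, rfl, by simpa using hx⟩

lemma reachB_self {E : ℕ → ℕ → Prop} {S : Finset ℕ} {y : ℕ} (hy : y ∉ S) : ReachB E S y y :=
  ⟨[], List.Chain.nil, rfl, by simpa using hy⟩

lemma reachF_notMem {E : ℕ → ℕ → Prop} {S : Finset ℕ} {x v : ℕ} (h : ReachF E S x v) : v ∉ S := by
  obtain ⟨l, _, hl, hs⟩ := h
  exact hl ▸ hs _ (List.getLast_mem _)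

lemma chain_concat {E : ℕ → ℕ → Prop} :
    ∀ (l₁ : List ℕ) (a z : ℕ), List.Chain E a l₁ →
      (a :: l₁).getLast (List.cons_ne_nil a l₁) = z →
      ∀ l₂ : List ℕ, List.Chain E z l₂ → List.Chain E a (l₁ ++ l₂) := by
  intro l₁
  induction l₁ with
  | nil =>
    intro a z _ hz l₂ h₂
    simp only [List.getLast_singleton] at hz
    subst hz; simpa using h₂
  | cons b t ih =>
    intro a z hc hz l₂ h₂
    replace hc : E a b ∧ List.Chain E b t := List.chain_cons.mp hc
    refine List.chain_cons.mpr ⟨hc.1, ih b z hc.2 ?_ l₂ h₂⟩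
    rw [← hz]
    exact (List.getLast_cons (List.cons_ne_nil b t)).symm

lemma reachF_step {E : ℕ → ℕ → Prop} {S : Finset ℕ} {x v w : ℕ}
    (h : ReachF E S x v) (he : E v w) (hw : w ∉ S) : ReachF E S x w := by
  obtain ⟨l, hc, hl, hs⟩ := h
  refine ⟨l ++ [w], chain_concat l x v hc hl [w] (List.chain_cons.mpr ⟨he, List.Chain.nil⟩), ?_, ?_⟩
  · show ((x :: l) ++ [w]).getLast _ = w
    exact List.getLast_append_singleton _
  · intro u hu
    have hu' : u ∈ (x :: l) ++ [w] := hu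
    rw [List.mem_append] at hu'
    rename' hu' => hu
    rcases hu with hu | hu
    · exact hs u hu
    · simp at hu; subst hu; exact hw

lemma reachB_step {E : ℕ → ℕ → Prop} {S : Finset ℕ} {y u v : ℕ}
    (he : E u v) (h : ReachB E S y v) (hu : u ∉ S) : ReachB E S y u := by
  obtain ⟨l, hc, hl, hs⟩ := h
  refine ⟨v :: l, List.chain_cons.mpr ⟨he, hc⟩, ?_, ?_⟩
  · rw [List.getLast_cons (List.cons_ne_nil v l)]; exact hl
  · intro w hw
    rcases List.mem_cons.mp hw with hw | hw
    · subst hw; exact hu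
    · exact hs w hw

lemma reach_glue {E : ℕ → ℕ → Prop} {S : Finset ℕ} {x y z : ℕ}
    (hF : ReachF E S x z) (hB : ReachB E S y z) :
    ∃ l : List ℕ, List.Chain E x l ∧
      (x :: l).getLast (List.cons_ne_nil x l) = y ∧ ∀ v ∈ x :: l, v ∉ S := by
  obtain ⟨l₁, hc₁, hl₁, hs₁⟩ := hF
  obtain ⟨l₂, hc₂, hl₂, hs₂⟩ := hB
  cases l₂ with
  | nil =>
    simp only [List.getLast_singleton] at hl₂
    subst hl₂
    exact ⟨l₁, hc₁, hl₁, hs₁⟩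
  | cons w t =>
    refine ⟨l₁ ++ (w :: t), chain_concat l₁ x z hc₁ hl₁ _ hc₂, ?_, ?_⟩
    · show ((x :: l₁) ++ (w :: t)).getLast _ = y
      rw [List.getLast_append_of_ne_nil _ (List.cons_ne_nil w t)]
      rw [List.getLast_cons (List.cons_ne_nil w t)] at hl₂
      exact hl₂
    · intro v hv
      have hv' : v ∈ (x :: l₁) ++ (w :: t) := hv
      rw [List.mem_append] at hv'
      rename' hv' => hv
      rcases hv with hv | hv
      · exact hs₁ v hv
      · exact hs₂ v (List.mem_cons_of_mem _ hv)

lemma FL (N : ℕ) (E : ℕ → ℕ → Prop) (γ δ : ℝ) (S : Finset ℕ) (x : ℕ)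
    (hδ0 : 0 < δ) (hδ1 : δ ≤ 1) (hγδ : 2 * δ ≤ γ)
    (hLE : IsLocalExpander N E δ)
    (hx1 : 1 ≤ x) (hxS : x ∉ S)
    (hgood : ∀ r : ℕ, 1 ≤ r → x + r ≤ N →
      γ * r ≤ (((Finset.Icc (x + 1) (x + r)) \ S).card : ℝ)) :
    ∀ ρ : ℕ, 1 ≤ ρ → x + ρ ≤ N →
      ((((Finset.Icc (x + 1) (x + ρ)) \ S).filter
        (fun w => ¬ ReachF E S x w)).card : ℝ) < δ * ρ := by
  intro ρ
  induction ρ using Nat.strong_induction_on with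
  | _ ρ ih =>
  intro hρ1 hρN
  obtain ⟨m, hm | hm⟩ := Nat.even_or_odd' ρ
  · -- even case : ρ = 2 * m
    subst hm
    have hm1 : 1 ≤ m := by omega
    have hIH := ih m (by omega) hm1 (by omega)
    have hAc : γ * m ≤ (((Finset.Icc (x + 1) (x + m)) \ S).card : ℝ) :=
      hgood m hm1 (by omega)
    set A := (Finset.Icc (x + 1) (x + m)) \ S with hA
    set X := A.filter (fun w => ReachF E S x w) with hX
    have hsplit : X.card + (A.filter (fun w => ¬ ReachF E S x w)).card = A.card :=
      Finset.card_filter_add_card_filter_not (p := fun w => ReachF E S x w)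
    have hXc : δ * m ≤ (X.card : ℝ) := by
      have h0 : (0:ℝ) ≤ (m : ℝ) := Nat.cast_nonneg m
      have : ((X.card : ℝ)) + ((A.filter (fun w => ¬ ReachF E S x w)).card : ℝ) = (A.card : ℝ) := by
        exact_mod_cast congrArg (Nat.cast : ℕ → ℝ) hsplit
      nlinarith [hIH, hAc]
    set Y := ((Finset.Icc (x + m + 1) (x + 2 * m)) \ S).filter (fun w => ¬ ReachF E S x w) with hYdef
    have hY : (Y.card : ℝ) < δ * m := by
      by_contra hcon
      push_neg at hcon
      obtain ⟨u, hu, w, hw, he⟩ := hLE (x + 1) m (by omega) hm1 (by omega) X Y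
        (by intro u hu
            have h1 := (Finset.mem_sdiff.1 (Finset.mem_filter.1 hu).1).1
            simp only [Finset.mem_Icc] at h1 ⊢
            omega)
        (by intro u hu
            have h1 := (Finset.mem_sdiff.1 (Finset.mem_filter.1 hu).1).1
            simp only [Finset.mem_Icc] at h1 ⊢
            omega)
        hXc hcon
      have hw' := Finset.mem_filter.1 hw
      have hwS := (Finset.mem_sdiff.1 hw'.1).2
      exact hw'.2 (reachF_step (Finset.mem_filter.1 hu).2 he hwS)
    have hunion : (Finset.Icc (x + 1) (x + 2 * m)) \ S
        = A ∪ ((Finset.Icc (x + m + 1) (x + 2 * m)) \ S) := by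
      rw [hA]
      ext u
      simp only [Finset.mem_sdiff, Finset.mem_union, Finset.mem_Icc]
      constructor
      · rintro ⟨⟨h1, h2⟩, hs⟩
        rcases le_or_gt u (x + m) with h | h
        · exact Or.inl ⟨⟨h1, h⟩, hs⟩
        · exact Or.inr ⟨⟨by omega, h2⟩, hs⟩
      · rintro (⟨⟨h1, h2⟩, hs⟩ | ⟨⟨h1, h2⟩, hs⟩) <;> exact ⟨⟨by omega, by omega⟩, hs⟩
    calc ((((Finset.Icc (x + 1) (x + 2 * m)) \ S).filter (fun w => ¬ ReachF E S x w)).card : ℝ)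
        ≤ ((A.filter (fun w => ¬ ReachF E S x w)).card : ℝ) + (Y.card : ℝ) := by
          rw [hunion, Finset.filter_union]
          exact_mod_cast Finset.card_union_le _ _
      _ < δ * m + δ * m := by linarith
      _ = δ * ((2 * m : ℕ) : ℝ) := by push_cast; ring
  · -- odd case : ρ = 2 * m + 1
    subst hm
    rcases Nat.eq_zero_or_pos m with hm0 | hm1
    · subst hm0
      set Y := ((Finset.Icc (x + 1) (x + (2 * 0 + 1))) \ S).filter (fun w => ¬ ReachF E S x w)
        with hYdef
      by_contra hcon
      push_neg at hcon
      have hcon' : δ * ((1 : ℕ) : ℝ) ≤ (Y.card : ℝ) := by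
        have h1 : ((2 * 0 + 1 : ℕ) : ℝ) = ((1 : ℕ) : ℝ) := by norm_num
        rw [← h1]; exact hcon
      obtain ⟨u, hu, w, hw, he⟩ := hLE x 1 hx1 le_rfl (by omega) {x} Y
        (by intro u hu; simp at hu; subst hu; simp [Finset.mem_Icc])
        (by intro u hu
            have h1 := (Finset.mem_sdiff.1 (Finset.mem_filter.1 hu).1).1
            simp only [Finset.mem_Icc] at h1 ⊢
            omega)
        (by simp; linarith) hcon'
      simp only [Finset.mem_singleton] at hu
      subst hu
      have hw' := Finset.mem_filter.1 hw
      have hwS := (Finset.mem_sdiff.1 hw'.1).2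
      exact hw'.2 (reachF_step (reachF_self hxS) he hwS)
    · have hIH := ih m (by omega) hm1 (by omega)
      have hAc : γ * m ≤ (((Finset.Icc (x + 1) (x + m)) \ S).card : ℝ) :=
        hgood m hm1 (by omega)
      set A := (Finset.Icc (x + 1) (x + m)) \ S with hA
      set X := insert x (A.filter (fun w => ReachF E S x w)) with hX
      have hxnot : x ∉ A.filter (fun w => ReachF E S x w) := by
        intro h
        have h1 := (Finset.mem_sdiff.1 (Finset.mem_filter.1 h).1).1
        simp only [Finset.mem_Icc] at h1
        omega
      have hsplit : (A.filter (fun w => ReachF E S x w)).card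
          + (A.filter (fun w => ¬ ReachF E S x w)).card = A.card :=
        Finset.card_filter_add_card_filter_not (p := fun w => ReachF E S x w)
      have hXcard : X.card = (A.filter (fun w => ReachF E S x w)).card + 1 := by
        rw [hX, Finset.card_insert_of_notMem hxnot]
      have hXc : δ * (((m + 1 : ℕ)) : ℝ) ≤ (X.card : ℝ) := by
        push_cast
        have h0 : (0:ℝ) ≤ (m : ℝ) := Nat.cast_nonneg m
        have hc : ((A.filter (fun w => ReachF E S x w)).card : ℝ)
            + ((A.filter (fun w => ¬ ReachF E S x w)).card : ℝ) = (A.card : ℝ) := by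
          exact_mod_cast congrArg (Nat.cast : ℕ → ℝ) hsplit
        have : (X.card : ℝ) = ((A.filter (fun w => ReachF E S x w)).card : ℝ) + 1 := by
          exact_mod_cast congrArg (Nat.cast : ℕ → ℝ) hXcard
        nlinarith [hIH, hAc]
      set Y := ((Finset.Icc (x + m + 1) (x + 2 * m + 1)) \ S).filter (fun w => ¬ ReachF E S x w)
        with hYdef
      have hY : (Y.card : ℝ) < δ * (((m + 1 : ℕ)) : ℝ) := by
        by_contra hcon
        push_neg at hcon
        obtain ⟨u, hu, w, hw, he⟩ := hLE x (m + 1) hx1 (by omega) (by omega) X Y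
          (by intro u hu
              rw [hX, Finset.mem_insert] at hu
              rcases hu with hu | hu
              · subst hu; simp only [Finset.mem_Icc]; omega
              · have h1 := (Finset.mem_sdiff.1 (Finset.mem_filter.1 hu).1).1
                simp only [Finset.mem_Icc] at h1 ⊢
                omega)
          (by intro u hu
              have h1 := (Finset.mem_sdiff.1 (Finset.mem_filter.1 hu).1).1
              simp only [Finset.mem_Icc] at h1 ⊢
              omega)
          hXc hcon
        have hw' := Finset.mem_filter.1 hw
        have hwS := (Finset.mem_sdiff.1 hw'.1).2
        have huF : ReachF E S x u := by
          rw [hX, Finset.mem_insert] at hu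
          rcases hu with hu | hu
          · subst hu; exact reachF_self hxS
          · exact (Finset.mem_filter.1 hu).2
        exact hw'.2 (reachF_step huF he hwS)
      have hunion : (Finset.Icc (x + 1) (x + (2 * m + 1))) \ S
          = A ∪ ((Finset.Icc (x + m + 1) (x + 2 * m + 1)) \ S) := by
        rw [hA]
        ext u
        simp only [Finset.mem_sdiff, Finset.mem_union, Finset.mem_Icc]
        constructor
        · rintro ⟨⟨h1, h2⟩, hs⟩
          rcases le_or_gt u (x + m) with h | h
          · exact Or.inl ⟨⟨h1, h⟩, hs⟩
          · exact Or.inr ⟨⟨by omega, by omega⟩, hs⟩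
        · rintro (⟨⟨h1, h2⟩, hs⟩ | ⟨⟨h1, h2⟩, hs⟩) <;> exact ⟨⟨by omega, by omega⟩, hs⟩
      calc ((((Finset.Icc (x + 1) (x + (2 * m + 1))) \ S).filter
            (fun w => ¬ ReachF E S x w)).card : ℝ)
          ≤ ((A.filter (fun w => ¬ ReachF E S x w)).card : ℝ) + (Y.card : ℝ) := by
            rw [hunion, Finset.filter_union]
            exact_mod_cast Finset.card_union_le _ _
        _ < δ * m + δ * (((m + 1 : ℕ)) : ℝ) := by linarith
        _ = δ * ((2 * m + 1 : ℕ) : ℝ) := by push_cast; ring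


set_option maxHeartbeats 2000000 in
lemma BL (N : ℕ) (E : ℕ → ℕ → Prop) (γ δ : ℝ) (S : Finset ℕ) (y : ℕ)
    (hδ0 : 0 < δ) (hδ1 : δ ≤ 1) (hγδ : 2 * δ ≤ γ)
    (hLE : IsLocalExpander N E δ)
    (hyN : y ≤ N) (hyS : y ∉ S)
    (hgood : ∀ r : ℕ, 1 ≤ r → r ≤ y →
      γ * r ≤ (((Finset.Icc (y - r + 1) y) \ S).card : ℝ)) :
    ∀ ρ : ℕ, ∀ a : ℕ, 1 ≤ ρ → 1 ≤ a → a + ρ = y →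
      ((((Finset.Icc (a + 1) y) \ S).filter
        (fun u => ¬ ReachB E S y u)).card : ℝ) < δ * ρ := by
  intro ρ
  induction ρ using Nat.strong_induction_on with
  | _ ρ ih =>
  intro a hρ1 ha1 hay
  -- goodness in additive form : for 1 ≤ t, b + t = y → γ * t ≤ |Icc (b+1) y \ S|
  have hgood' : ∀ t b : ℕ, 1 ≤ t → b + t = y →
      γ * t ≤ (((Finset.Icc (b + 1) y) \ S).card : ℝ) := by
    intro t b ht hbt
    have h := hgood t ht (by omega)
    have : y - t + 1 = b + 1 := by omega
    rwa [this] at h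
  rcases Nat.lt_or_ge ρ 2 with hρ2 | hρ2
  · -- ρ = 1 : the set is empty
    have hρ : ρ = 1 := by omega
    subst hρ
    have hset : ((Finset.Icc (a + 1) y) \ S).filter (fun u => ¬ ReachB E S y u) = ∅ := by
      ext u
      simp only [Finset.mem_filter, Finset.mem_sdiff, Finset.mem_Icc, Finset.notMem_empty,
        iff_false, not_and]
      rintro ⟨⟨h1, h2⟩, hs⟩
      have : u = y := by omega
      subst this
      simp [reachB_self hs]
    rw [hset]
    simpa using by positivity
  -- ρ ≥ 2
  by_contra hcon
  push_neg at hcon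
  set V := ((Finset.Icc (a + 1) y) \ S).filter (fun u => ¬ ReachB E S y u) with hV
  obtain ⟨m, hm | hm⟩ := Nat.even_or_odd' ρ
  · -- even : ρ = 2 * m, m ≥ 1
    have hm1 : 1 ≤ m := by omega
    -- IH at scale m, base point a + m
    have hIH : (((Finset.Icc (a + m + 1) y) \ S).filter
        (fun u => ¬ ReachB E S y u)).card < δ * m := by
      have := ih m (by omega) (a + m) hm1 (by omega) (by omega)
      exact this
    -- the part of V above a + m
    set V1 := V.filter (fun u => ¬ (u ≤ a + m)) with hV1
    set X := V.filter (fun u => u ≤ a + m) with hX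
    have hsplitV : X.card + V1.card = V.card :=
      Finset.card_filter_add_card_filter_not (p := fun u => u ≤ a + m)
    have hV1sub : V1 ⊆ ((Finset.Icc (a + m + 1) y) \ S).filter (fun u => ¬ ReachB E S y u) := by
      intro u hu
      have h1 := Finset.mem_filter.1 hu
      have h2 := Finset.mem_filter.1 h1.1
      have h3 := Finset.mem_sdiff.1 h2.1
      have h4 := Finset.mem_Icc.1 h3.1
      refine Finset.mem_filter.2 ⟨Finset.mem_sdiff.2 ⟨Finset.mem_Icc.2 ⟨?_, h4.2⟩, h3.2⟩, h2.2⟩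
      have := h1.2
      omega
    have hV1c : (V1.card : ℝ) < δ * m := by
      calc (V1.card : ℝ) ≤ _ := Nat.cast_le.2 (Finset.card_le_card hV1sub)
        _ < δ * m := hIH
    have hXc : δ * m ≤ (X.card : ℝ) := by
      have hVc : δ * ((2 * m : ℕ) : ℝ) ≤ (V.card : ℝ) := by
        rw [hm] at hcon
        exact hcon
      have : ((X.card : ℝ)) + (V1.card : ℝ) = (V.card : ℝ) := by
        exact_mod_cast congrArg (Nat.cast : ℕ → ℝ) hsplitV
      push_cast at hVc
      linarith
    -- B-mass near y
    have hYm : δ * m ≤ ((((Finset.Icc (a + m + 1) y) \ S).filter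
        (fun u => ReachB E S y u)).card : ℝ) := by
      have hg := hgood' m (a + m) hm1 (by omega)
      have hs : (((Finset.Icc (a + m + 1) y) \ S).filter (fun u => ReachB E S y u)).card
          + (((Finset.Icc (a + m + 1) y) \ S).filter (fun u => ¬ ReachB E S y u)).card
          = ((Finset.Icc (a + m + 1) y) \ S).card :=
        Finset.card_filter_add_card_filter_not (p := fun u => ReachB E S y u)
      have hs' : ((((Finset.Icc (a + m + 1) y) \ S).filter (fun u => ReachB E S y u)).card : ℝ)
          + ((((Finset.Icc (a + m + 1) y) \ S).filter (fun u => ¬ ReachB E S y u)).card : ℝ)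
          = (((Finset.Icc (a + m + 1) y) \ S).card : ℝ) := by
        exact_mod_cast congrArg (Nat.cast : ℕ → ℝ) hs
      have h0 : (0:ℝ) ≤ (m : ℝ) := Nat.cast_nonneg m
      nlinarith [hIH]
    obtain ⟨u, hu, w, hw, he⟩ := hLE (a + 1) m (by omega) hm1 (by omega) X
      (((Finset.Icc (a + m + 1) y) \ S).filter (fun u => ReachB E S y u))
      (by intro u hu
          have h1 := Finset.mem_filter.1 hu
          have h2 := Finset.mem_filter.1 h1.1
          have h3 := (Finset.mem_sdiff.1 h2.1).1
          have h4 := Finset.mem_Icc.1 h3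
          simp only [Finset.mem_Icc]
          have := h1.2
          omega)
      (by intro u hu
          have h3 := (Finset.mem_sdiff.1 (Finset.mem_filter.1 hu).1).1
          have h4 := Finset.mem_Icc.1 h3
          simp only [Finset.mem_Icc]
          omega)
      hXc hYm
    · have h1 := Finset.mem_filter.1 hu
      have h2 := Finset.mem_filter.1 h1.1
      have h3 := Finset.mem_sdiff.1 h2.1
      exact h2.2 (reachB_step he (Finset.mem_filter.1 hw).2 h3.2)
  · -- odd : ρ = 2 * m + 1, m ≥ 1
    have hm1 : 1 ≤ m := by omega
    -- IH at scale m + 1 (base point a + m) and scale m (base point a + m + 1)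
    have hIH1 : ((((Finset.Icc (a + m + 1) y) \ S).filter
        (fun u => ¬ ReachB E S y u)).card : ℝ) < δ * ((m : ℝ) + 1) := by
      have h := ih (m + 1) (by omega) (a + m) (by omega) (by omega) (by omega)
      push_cast at h
      exact h
    have hIH0 : ((((Finset.Icc (a + m + 2) y) \ S).filter
        (fun u => ¬ ReachB E S y u)).card : ℝ) < δ * m := by
      have := ih m (by omega) (a + m + 1) hm1 (by omega) (by omega)
      exact_mod_cast this
    -- B-mass at scale m+1 : Y_A
    set YA := ((Finset.Icc (a + m + 1) y) \ S).filter (fun u => ReachB E S y u) with hYA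
    have hYAc : δ * ((m : ℝ) + 1) ≤ (YA.card : ℝ) := by
      have hg := hgood' (m + 1) (a + m) (by omega) (by omega)
      have hs : YA.card + (((Finset.Icc (a + m + 1) y) \ S).filter
          (fun u => ¬ ReachB E S y u)).card = ((Finset.Icc (a + m + 1) y) \ S).card :=
        Finset.card_filter_add_card_filter_not (p := fun u => ReachB E S y u)
      have hs' : ((YA.card : ℝ)) + ((((Finset.Icc (a + m + 1) y) \ S).filter
          (fun u => ¬ ReachB E S y u)).card : ℝ) = (((Finset.Icc (a + m + 1) y) \ S).card : ℝ) := by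
        exact_mod_cast congrArg (Nat.cast : ℕ → ℝ) hs
      have h0 : (0:ℝ) ≤ ((m : ℝ) + 1) := by positivity
      push_cast at hg hs' ⊢
      nlinarith [hIH1]
    set XA := V.filter (fun u => u ≤ a + m) with hXA
    by_cases hA : δ * ((m : ℝ) + 1) ≤ (XA.card : ℝ)
    · -- fire A
      obtain ⟨u, hu, w, hw, he⟩ := hLE a (m + 1) ha1 (by omega) (by omega) XA YA
        (by intro u hu
            have h1 := Finset.mem_filter.1 hu
            have h2 := Finset.mem_filter.1 h1.1
            have h3 := (Finset.mem_sdiff.1 h2.1).1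
            have h4 := Finset.mem_Icc.1 h3
            simp only [Finset.mem_Icc]
            have := h1.2
            omega)
        (by intro u hu
            have h3 := (Finset.mem_sdiff.1 (Finset.mem_filter.1 hu).1).1
            have h4 := Finset.mem_Icc.1 h3
            simp only [Finset.mem_Icc]
            omega)
        (by push_cast; exact hA) (by push_cast; exact hYAc)
      have h1 := Finset.mem_filter.1 hu
      have h2 := Finset.mem_filter.1 h1.1
      have h3 := Finset.mem_sdiff.1 h2.1
      exact h2.2 (reachB_step he (Finset.mem_filter.1 hw).2 h3.2)
    · -- fire B
      push_neg at hA
      -- V1 : part of V above a + m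
      set V1 := V.filter (fun u => ¬ (u ≤ a + m)) with hV1
      have hsplitV : XA.card + V1.card = V.card :=
        Finset.card_filter_add_card_filter_not (p := fun u => u ≤ a + m)
      have hV1sub : V1 ⊆ ((Finset.Icc (a + m + 1) y) \ S).filter (fun u => ¬ ReachB E S y u) := by
        intro u hu
        have h1 := Finset.mem_filter.1 hu
        have h2 := Finset.mem_filter.1 h1.1
        have h3 := Finset.mem_sdiff.1 h2.1
        have h4 := Finset.mem_Icc.1 h3.1
        refine Finset.mem_filter.2 ⟨Finset.mem_sdiff.2 ⟨Finset.mem_Icc.2 ⟨?_, h4.2⟩, h3.2⟩, h2.2⟩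
        have := h1.2
        omega
      have hV1c : (V1.card : ℝ) < δ * ((m : ℝ) + 1) := by
        calc (V1.card : ℝ) ≤ _ := Nat.cast_le.2 (Finset.card_le_card hV1sub)
          _ < δ * ((m : ℝ) + 1) := hIH1
      -- V0 : part of V above a + m + 1
      set V0 := V.filter (fun u => a + m + 2 ≤ u) with hV0
      have hV0sub : V0 ⊆ ((Finset.Icc (a + m + 2) y) \ S).filter (fun u => ¬ ReachB E S y u) := by
        intro u hu
        have h1 := Finset.mem_filter.1 hu
        have h2 := Finset.mem_filter.1 h1.1
        have h3 := Finset.mem_sdiff.1 h2.1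
        have h4 := Finset.mem_Icc.1 h3.1
        exact Finset.mem_filter.2 ⟨Finset.mem_sdiff.2 ⟨Finset.mem_Icc.2 ⟨h1.2, h4.2⟩, h3.2⟩, h2.2⟩
      have hV0c : (V0.card : ℝ) < δ * m := by
        calc (V0.card : ℝ) ≤ _ := Nat.cast_le.2 (Finset.card_le_card hV0sub)
          _ < δ * m := hIH0
      -- X_B : middle part of V
      set XB := V.filter (fun u => a + 2 ≤ u ∧ u ≤ a + m + 1) with hXB
      have hcover : V ⊆ insert (a + 1) (XB ∪ V0) := by
        intro u hu
        have h2 := Finset.mem_filter.1 hu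
        have h3 := Finset.mem_sdiff.1 h2.1
        have h4 := Finset.mem_Icc.1 h3.1
        rcases Nat.lt_or_ge u (a + 2) with h | h
        · have : u = a + 1 := by omega
          simp [this]
        · rcases Nat.lt_or_ge u (a + m + 2) with h' | h'
          · exact Finset.mem_insert_of_mem (Finset.mem_union_left _
              (Finset.mem_filter.2 ⟨hu, h, by omega⟩))
          · exact Finset.mem_insert_of_mem (Finset.mem_union_right _
              (Finset.mem_filter.2 ⟨hu, h'⟩))
      have hVle : (V.card : ℝ) ≤ (XB.card : ℝ) + (V0.card : ℝ) + 1 := by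
        have h1 : V.card ≤ (insert (a + 1) (XB ∪ V0)).card := Finset.card_le_card hcover
        have h2 : (insert (a + 1) (XB ∪ V0)).card ≤ (XB ∪ V0).card + 1 :=
          Finset.card_insert_le _ _
        have h3 : (XB ∪ V0).card ≤ XB.card + V0.card := Finset.card_union_le _ _
        have : V.card ≤ XB.card + V0.card + 1 := by omega
        exact_mod_cast this
      -- ceiling arithmetic to show δ*m ≤ XB.card
      have hVcR : δ * ((m : ℝ) + 1) + δ * (m : ℝ) ≤ (V.card : ℝ) := by
        have : δ * ((ρ : ℕ) : ℝ) ≤ (V.card : ℝ) := hcon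
        rw [hm] at this
        push_cast at this
        linarith
      set K : ℕ := ⌈δ * ((m : ℝ) + 1)⌉₊ with hK
      set K0 : ℕ := ⌈δ * (m : ℝ)⌉₊ with hK0
      have hXAK : XA.card < K := Nat.lt_ceil.2 hA
      have hV1K : V1.card < K := Nat.lt_ceil.2 hV1c
      have hVK : (V.card : ℝ) ≤ 2 * (K : ℝ) - 2 := by
        have hK1 : 1 ≤ K := by omega
        have hn : V.card + 2 ≤ 2 * K := by omega
        have hn' : ((V.card : ℝ)) + 2 ≤ 2 * (K : ℝ) := by exact_mod_cast hn
        linarith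
      have hKge : δ * ((m : ℝ) + 1) + 1 - δ / 2 ≤ (K : ℝ) := by linarith
      have hKub : (K : ℝ) < δ * ((m : ℝ) + 1) + 1 := Nat.ceil_lt_add_one (by positivity)
      have hK0ub : (K0 : ℝ) < δ * (m : ℝ) + 1 := Nat.ceil_lt_add_one (by positivity)
      have hK0K : K0 < K := by
        have : (K0 : ℝ) < (K : ℝ) := by linarith
        exact_mod_cast this
      have hK0le : (K0 : ℝ) ≤ (K : ℝ) - 1 := by
        have h2 : K0 + 1 ≤ K := hK0K
        have h3 : ((K0 : ℝ)) + 1 ≤ (K : ℝ) := by exact_mod_cast h2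
        linarith
      have hK0lt : (K0 : ℝ) < δ * ((m : ℝ) + 1) := by linarith
      have hV0K : (V0.card : ℝ) ≤ (K0 : ℝ) - 1 := by
        have h1 : V0.card < K0 := Nat.lt_ceil.2 hV0c
        have h2 : V0.card + 1 ≤ K0 := h1
        have h3 : ((V0.card : ℝ)) + 1 ≤ (K0 : ℝ) := by exact_mod_cast h2
        linarith
      have hXBc : δ * m ≤ (XB.card : ℝ) := by linarith
      -- Y_B mass
      set YB := ((Finset.Icc (a + m + 2) y) \ S).filter (fun u => ReachB E S y u) with hYB
      have hYBc : δ * m ≤ (YB.card : ℝ) := by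
        have hg := hgood' m (a + m + 1) hm1 (by omega)
        have hs : YB.card + (((Finset.Icc (a + m + 2) y) \ S).filter
            (fun u => ¬ ReachB E S y u)).card = ((Finset.Icc (a + m + 2) y) \ S).card :=
          Finset.card_filter_add_card_filter_not (p := fun u => ReachB E S y u)
        have hs' : ((YB.card : ℝ)) + ((((Finset.Icc (a + m + 2) y) \ S).filter
            (fun u => ¬ ReachB E S y u)).card : ℝ)
            = (((Finset.Icc (a + m + 2) y) \ S).card : ℝ) := by
          exact_mod_cast congrArg (Nat.cast : ℕ → ℝ) hs
        have h0 : (0:ℝ) ≤ (m : ℝ) := Nat.cast_nonneg m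
        nlinarith [hIH0]
      obtain ⟨u, hu, w, hw, he⟩ := hLE (a + 2) m (by omega) hm1 (by omega) XB YB
        (by intro u hu
            have h1 := Finset.mem_filter.1 hu
            simp only [Finset.mem_Icc]
            have := h1.2
            omega)
        (by intro u hu
            have h3 := (Finset.mem_sdiff.1 (Finset.mem_filter.1 hu).1).1
            have h4 := Finset.mem_Icc.1 h3
            simp only [Finset.mem_Icc]
            omega)
        hXBc hYBc
      have h1 := Finset.mem_filter.1 hu
      have h2 := Finset.mem_filter.1 h1.1
      have h3 := Finset.mem_sdiff.1 h2.1
      exact h2.2 (reachB_step he (Finset.mem_filter.1 hw).2 h3.2)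


/-- Let `G = ([N],E)` be a DAG (all edges `(u,v)` satisfy `u < v`,
with endpoints in `[N]`) that is a `δ`-local expander where `δ < min(γ/2, 1/4)` and
`0 < γ < 1`. If `x < y` are both `γ`-good with respect to `S ⊆ [N]`, then there is a
directed path in `G` from `x` to `y` all of whose vertices (including `x` and `y`)
lie outside `S`. -/
theorem stmt10 (N : ℕ) (E : ℕ → ℕ → Prop)
    (hE : ∀ u v, E u v → 1 ≤ u ∧ u < v ∧ v ≤ N)
    (γ δ : ℝ) (hγ0 : 0 < γ) (hγ1 : γ < 1) (hδ : δ < min (γ / 2) (1 / 4))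
    (hLE : IsLocalExpander N E δ)
    (S : Finset ℕ) (hS : S ⊆ Finset.Icc 1 N)
    (x y : ℕ) (hx : x ∈ Finset.Icc 1 N) (hy : y ∈ Finset.Icc 1 N) (hxy : x < y)
    (hgx : IsGood N γ S x) (hgy : IsGood N γ S y) :
    ∃ l : List ℕ, List.Chain E x l ∧
      (x :: l).getLast (List.cons_ne_nil x l) = y ∧
      ∀ v ∈ x :: l, v ∉ S := by
  have hx1 : 1 ≤ x := (Finset.mem_Icc.1 hx).1
  have hyN : y ≤ N := (Finset.mem_Icc.1 hy).2
  have hN2 : 2 ≤ N := by omega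
  have hδγ : δ < γ / 2 := lt_of_lt_of_le hδ (min_le_left _ _)
  have hδq : δ < 1 / 4 := lt_of_lt_of_le hδ (min_le_right _ _)
  have hδ1 : δ ≤ 1 := by linarith
  have hγδ : 2 * δ ≤ γ := by linarith
  have hδ0 : 0 < δ := by
    by_contra hδ0
    push_neg at hδ0
    obtain ⟨u, hu, -⟩ := hLE 1 1 le_rfl le_rfl (by omega) ∅ ∅ (by simp) (by simp)
      (by simp; linarith) (by simp; linarith)
    simp at hu
  have hxS : x ∉ S := by
    intro hxS
    have h := hgx.1 1 le_rfl hx1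
    have e : x - 1 + 1 = x := by omega
    rw [e, Finset.Icc_self] at h
    have h2 : (({x} : Finset ℕ) \ S) = ∅ := by
      ext u
      simp only [Finset.mem_sdiff, Finset.mem_singleton, Finset.notMem_empty, iff_false, not_and]
      rintro rfl
      simpa using hxS
    rw [h2] at h
    simp at h
    linarith
  have hyS : y ∉ S := by
    intro hyS
    have h := hgy.1 1 le_rfl (by omega)
    have e : y - 1 + 1 = y := by omega
    rw [e, Finset.Icc_self] at h
    have h2 : (({y} : Finset ℕ) \ S) = ∅ := by
      ext u
      simp only [Finset.mem_sdiff, Finset.mem_singleton, Finset.notMem_empty, iff_false, not_and]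
      rintro rfl
      simpa using hyS
    rw [h2] at h
    simp at h
    linarith
  set d := y - x with hddef
  have hd : x + d = y := by omega
  have hd1 : 1 ≤ d := by omega
  have hgoodF : ∀ r : ℕ, 1 ≤ r → x + r ≤ N →
      γ * r ≤ (((Finset.Icc (x + 1) (x + r)) \ S).card : ℝ) := by
    intro r h1 h2
    have h := hgx.2 r h1 h2
    have e : (Finset.Icc (x + 1) (x + r)).card = r := by rw [Nat.card_Icc]; omega
    rwa [e] at h
  have hgoodB : ∀ r : ℕ, 1 ≤ r → r ≤ y →
      γ * r ≤ (((Finset.Icc (y - r + 1) y) \ S).card : ℝ) := by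
    intro r h1 h2
    have h := hgy.1 r h1 h2
    have e : (Finset.Icc (y - r + 1) y).card = r := by rw [Nat.card_Icc]; omega
    rwa [e] at h
  have hF := FL N E γ δ S x hδ0 hδ1 hγδ hLE hx1 hxS hgoodF d hd1 (by omega)
  rw [hd] at hF
  have hB := BL N E γ δ S y hδ0 hδ1 hγδ hLE hyN hyS hgoodB d x hd1 hx1 hd
  have hΩ : γ * d ≤ (((Finset.Icc (x + 1) y) \ S).card : ℝ) := by
    have h := hgoodF d hd1 (by omega)
    rwa [hd] at h
  set Ω := (Finset.Icc (x + 1) y) \ S with hΩdef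
  set P := Ω.filter (fun w => ReachF E S x w ∧ ReachB E S y w) with hP
  have hsub : Ω ⊆ P ∪ (Ω.filter (fun w => ¬ ReachF E S x w))
      ∪ (Ω.filter (fun w => ¬ ReachB E S y w)) := by
    intro u hu
    by_cases h1 : ReachF E S x u
    · by_cases h2 : ReachB E S y u
      · exact Finset.mem_union_left _ (Finset.mem_union_left _
          (Finset.mem_filter.2 ⟨hu, h1, h2⟩))
      · exact Finset.mem_union_right _ (Finset.mem_filter.2 ⟨hu, h2⟩)
    · exact Finset.mem_union_left _ (Finset.mem_union_right _ (Finset.mem_filter.2 ⟨hu, h1⟩))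
  have hcard : Ω.card ≤ P.card + (Ω.filter (fun w => ¬ ReachF E S x w)).card
      + (Ω.filter (fun w => ¬ ReachB E S y w)).card := by
    calc Ω.card ≤ (P ∪ (Ω.filter (fun w => ¬ ReachF E S x w))
        ∪ (Ω.filter (fun w => ¬ ReachB E S y w))).card := Finset.card_le_card hsub
      _ ≤ (P ∪ (Ω.filter (fun w => ¬ ReachF E S x w))).card
          + (Ω.filter (fun w => ¬ ReachB E S y w)).card := Finset.card_union_le _ _
      _ ≤ P.card + (Ω.filter (fun w => ¬ ReachF E S x w)).card
          + (Ω.filter (fun w => ¬ ReachB E S y w)).card := by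
            have := Finset.card_union_le P (Ω.filter (fun w => ¬ ReachF E S x w))
            omega
  have hcardR : ((Ω.card : ℝ)) ≤ (P.card : ℝ)
      + ((Ω.filter (fun w => ¬ ReachF E S x w)).card : ℝ)
      + ((Ω.filter (fun w => ¬ ReachB E S y w)).card : ℝ) := by exact_mod_cast hcard
  have hd0 : (0:ℝ) < (d : ℝ) := by exact_mod_cast hd1
  have hPpos : 0 < P.card := by
    by_contra hc
    push_neg at hc
    have : P.card = 0 := by omega
    rw [this] at hcardR
    simp at hcardR
    nlinarith
  obtain ⟨z, hz⟩ := Finset.card_pos.1 hPpos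
  have hz' := Finset.mem_filter.1 hz
  exact reach_glue hz'.2.1 hz'.2.2
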